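/- arXiv:1310.5773 — 2 statements merged into one kernel-verified Lean document; each statement's English description precedes it below -/
import Mathlib

section
/- There exists a periodic Golay pair of length 164. -/
open Finset

/-- Zero-extension of a sequence indexed by `ZMod v` to all of `ℤ`,
with `a_i = 0` for `i` outside `[0, v-1]`. -/
def zext (v : ℕ) (A : ZMod v → ℤ) (n : ℤ) : ℤ :=
  if 0 ≤ n ∧ n < (v : ℤ) then A (n : ZMod v) else 0

/-- Nonperiodic autocorrelation function `NAF_A(s) = Σ_{i∈ℤ} a_i a_{i+s}`. -/
def naf (v : ℕ) (A : ZMod v → ℤ) (s : ℤ) : ℤ :=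
  ∑ i ∈ Finset.range v, zext v A i * zext v A (i + s)

/-- Periodic autocorrelation function `PAF_A(s) = Σ_{i∈Z_v} a_i a_{i+s}`. -/
def paf (v : ℕ) (A : ZMod v → ℤ) (s : ZMod v) : ℤ :=
  ∑ i ∈ Finset.range v, A i * A ((i : ZMod v) + s)

/-- Number of ordered pairs `(a,b)` with `a - b = c` and both `a,b` in `X`,
or both in `Y` (counted with multiplicity over the two blocks). -/
def sdsCount (v : ℕ) (X Y : Finset (ZMod v)) (c : ZMod v) : ℕ :=
  ((X ×ˢ X).filter fun p => p.1 - p.2 = c).card +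
  ((Y ×ˢ Y).filter fun p => p.1 - p.2 = c).card

def aL : List ℤ := [1, 1, 1, 1, -1, -1, -1, 1, 1, -1, -1, -1, -1, 1, -1, 1, -1, 1, -1, 1, -1, -1, 1, -1, 1, -1, -1, 1, -1, 1, -1, -1, -1, -1, 1, 1, -1, 1, 1, 1, -1, 1, -1, 1, 1, -1, -1, 1, 1, -1, -1, -1, -1, 1, -1, 1, 1, 1, -1, -1, -1, -1, -1, 1, -1, -1, 1, 1, 1, 1, -1, 1, -1, -1, 1, -1, 1, -1, -1, -1, 1, -1, 1, -1, -1, 1, 1, 1, -1, 1, -1, 1, -1, 1, 1, 1, -1, -1, -1, 1, -1, 1, 1, 1, 1, -1, 1, -1, -1, -1, 1, 1, 1, -1, 1, 1, -1, -1, 1, -1, -1, -1, 1, -1, -1, -1, -1, -1, 1, 1, -1, 1, 1, 1, 1, -1, 1, 1, 1, -1, -1, 1, -1, 1, 1, -1, 1, 1, -1, 1, 1, -1, 1, 1, 1, 1, -1, 1, 1, 1, -1, 1, -1, -1]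
def bL : List ℤ := [1, 1, 1, -1, -1, 1, 1, -1, 1, 1, 1, -1, 1, -1, 1, 1, -1, 1, 1, -1, -1, 1, 1, -1, 1, 1, 1, 1, 1, -1, -1, -1, -1, -1, 1, 1, -1, 1, 1, 1, -1, -1, 1, 1, -1, 1, -1, -1, -1, 1, -1, 1, 1, -1, -1, -1, 1, 1, 1, 1, 1, -1, -1, 1, -1, 1, -1, -1, 1, -1, -1, -1, -1, -1, 1, -1, 1, -1, 1, -1, 1, 1, -1, 1, -1, -1, -1, 1, 1, -1, -1, 1, -1, -1, 1, -1, 1, 1, 1, -1, -1, 1, 1, 1, 1, 1, 1, -1, 1, 1, 1, -1, -1, 1, 1, 1, 1, 1, 1, 1, 1, 1, -1, -1, -1, -1, -1, -1, 1, 1, -1, 1, 1, 1, 1, -1, -1, 1, 1, 1, 1, 1, 1, 1, 1, 1, -1, 1, -1, 1, 1, -1, -1, -1, -1, 1, -1, -1, 1, 1, -1, -1, -1, -1]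

def fA : ZMod 164 → ℤ := fun i => aL.getD i.val 0
def fB : ZMod 164 → ℤ := fun i => bL.getD i.val 0
lemma chunk1 : ∀ s ∈ Finset.Icc (1:ℕ) 28, paf 164 fA (s : ZMod 164) + paf 164 fB (s : ZMod 164) = 0 := by
  set_option maxRecDepth 1000000 in set_option maxHeartbeats 1000000000 in decide

lemma chunk2 : ∀ s ∈ Finset.Icc (29:ℕ) 56, paf 164 fA (s : ZMod 164) + paf 164 fB (s : ZMod 164) = 0 := by
  set_option maxRecDepth 1000000 in set_option maxHeartbeats 1000000000 in decide

lemma chunk3 : ∀ s ∈ Finset.Icc (57:ℕ) 84, paf 164 fA (s : ZMod 164) + paf 164 fB (s : ZMod 164) = 0 := by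
  set_option maxRecDepth 1000000 in set_option maxHeartbeats 1000000000 in decide

lemma chunk4 : ∀ s ∈ Finset.Icc (85:ℕ) 112, paf 164 fA (s : ZMod 164) + paf 164 fB (s : ZMod 164) = 0 := by
  set_option maxRecDepth 1000000 in set_option maxHeartbeats 1000000000 in decide

lemma chunk5 : ∀ s ∈ Finset.Icc (113:ℕ) 140, paf 164 fA (s : ZMod 164) + paf 164 fB (s : ZMod 164) = 0 := by
  set_option maxRecDepth 1000000 in set_option maxHeartbeats 1000000000 in decide

lemma chunk6 : ∀ s ∈ Finset.Icc (141:ℕ) 163, paf 164 fA (s : ZMod 164) + paf 164 fB (s : ZMod 164) = 0 := by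
  set_option maxRecDepth 1000000 in set_option maxHeartbeats 1000000000 in decide

set_option maxRecDepth 1000000 in
theorem periodic_golay_pair_length_164 :
    ∃ A B : ZMod 164 → ℤ,
      (∀ i, A i = 1 ∨ A i = -1) ∧ (∀ i, B i = 1 ∨ B i = -1) ∧
      ∀ s : ZMod 164, s ≠ 0 → paf 164 A s + paf 164 B s = 0 := by
  refine ⟨fA, fB, by decide, by decide, ?_⟩
  intro s hs
  have hv0 : s.val ≠ 0 := by simpa [ZMod.val_eq_zero] using hs
  have h1 : 1 ≤ s.val := Nat.one_le_iff_ne_zero.mpr hv0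
  have h2 : s.val ≤ 163 := Nat.le_of_lt_succ (ZMod.val_lt s)
  have hcast : ((s.val : ℕ) : ZMod 164) = s := ZMod.natCast_zmod_val s
  rw [← hcast]
  rcases le_or_gt s.val 28 with h | h
  · exact chunk1 s.val (Finset.mem_Icc.mpr ⟨h1, h⟩)
  rcases le_or_gt s.val 56 with h' | h'
  · exact chunk2 s.val (Finset.mem_Icc.mpr ⟨h, h'⟩)
  rcases le_or_gt s.val 84 with h'' | h''
  · exact chunk3 s.val (Finset.mem_Icc.mpr ⟨h', h''⟩)
  rcases le_or_gt s.val 112 with h3 | h3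
  · exact chunk4 s.val (Finset.mem_Icc.mpr ⟨h'', h3⟩)
  rcases le_or_gt s.val 140 with h4 | h4
  · exact chunk5 s.val (Finset.mem_Icc.mpr ⟨h3, h4⟩)
  · exact chunk6 s.val (Finset.mem_Icc.mpr ⟨h4, h2⟩)
end

section
/- If (A, B) is a Golay pair of length g and (C, D) is a periodic Golay pair of length d, then there exists a periodic Golay pair of length gd. In particular, the product of a Golay number and a periodic Golay number is a periodic Golay number. -/
open Finset

noncomputable def els (n m : ℕ) (φ : ℕ → ℤ) (w : ℕ → ℤ) : AddMonoidAlgebra ℤ (ZMod n) :=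
  ∑ i ∈ Finset.range m, AddMonoidAlgebra.single ((φ i : ZMod n)) (w i)

lemma els_mul (n m m' : ℕ) (φ φ' w w' : ℕ → ℤ) :
    els n m φ w * els n m' φ' w' =
    ∑ i ∈ Finset.range m, ∑ i' ∈ Finset.range m',
      AddMonoidAlgebra.single (((φ i + φ' i' : ℤ) : ZMod n)) (w i * w' i') := by
  rw [els, els, Finset.sum_mul_sum]
  refine Finset.sum_congr rfl fun i _ => Finset.sum_congr rfl fun i' _ => ?_
  rw [AddMonoidAlgebra.single_mul_single]
  push_cast
  ring_nf

lemma els_apply (n m : ℕ) (φ w : ℕ → ℤ) (k : ZMod n) :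
    (els n m φ w).coeff k = ∑ i ∈ Finset.range m, if ((φ i : ℤ) : ZMod n) = k then w i else 0 := by
  rw [els, AddMonoidAlgebra.coeff_sum, Finsupp.finset_sum_apply]
  exact Finset.sum_congr rfl fun i _ => Finsupp.single_apply

lemma mul_apply_eq (n : ℕ) [NeZero n] (x y : AddMonoidAlgebra ℤ (ZMod n)) (s : ZMod n) :
    (x * y).coeff s = ∑ k : ZMod n, x.coeff k * y.coeff (s - k) := by
  rw [AddMonoidAlgebra.coeff_mul]
  rw [Finsupp.sum_fintype _ _ (by intro a; simp)]
  refine Finset.sum_congr rfl fun k _ => ?_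
  rw [Finsupp.sum_fintype _ _ (by intro a; simp)]
  rw [Finset.sum_eq_single (s - k)]
  · rw [if_pos (by ring)]
  · intro b _ hb
    rw [if_neg]
    intro h
    exact hb (by linear_combination h)
  · simp

lemma zext_nat (v : ℕ) (A : ZMod v → ℤ) (i : ℕ) (h : i < v) :
    zext v A i = A i := by
  rw [zext, if_pos (by constructor <;> [positivity; exact_mod_cast h])]
  norm_cast

lemma naf_zero (g : ℕ) (A : ZMod g → ℤ) (hA : ∀ i, A i = 1 ∨ A i = -1) :
    naf g A 0 = g := by
  rw [naf]
  have h1 : ∀ i ∈ Finset.range g, zext g A i * zext g A (i + 0) = 1 := by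
    intro i hi
    rw [add_zero, zext_nat g A i (Finset.mem_range.mp hi)]
    rcases hA i with h | h <;> rw [h] <;> norm_num
  rw [Finset.sum_congr rfl h1]
  simp

lemma sum_single_apply {M : Type*} [AddCommMonoid M] [DecidableEq M] (s t : Finset ℕ)
    (z : ℕ → ℕ → M) (w : ℕ → ℕ → ℤ) (k : M) :
    (∑ i ∈ s, ∑ j ∈ t, AddMonoidAlgebra.single (z i j) (w i j)).coeff k
      = ∑ i ∈ s, ∑ j ∈ t, if z i j = k then w i j else 0 := by
  rw [AddMonoidAlgebra.coeff_sum, Finsupp.finset_sum_apply]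
  exact Finset.sum_congr rfl fun i _ => by
    rw [AddMonoidAlgebra.coeff_sum, Finsupp.finset_sum_apply]
    exact Finset.sum_congr rfl fun j _ => Finsupp.single_apply

lemma fiber_naf (g : ℕ) (A : ZMod g → ℤ) (t : ℤ) :
    ∑ p ∈ (Finset.range g ×ˢ Finset.range g).filter
        (fun p => (p.2 : ℤ) - (p.1 : ℤ) = t), A p.1 * A p.2 = naf g A t := by
  rw [Finset.sum_filter, Finset.sum_product, naf]
  refine Finset.sum_congr rfl fun i hi => ?_
  rw [zext_nat g A i (Finset.mem_range.mp hi)]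
  by_cases h : 0 ≤ (i : ℤ) + t ∧ (i : ℤ) + t < g
  · set m := ((i : ℤ) + t).toNat with hm
    have hmi : (m : ℤ) = (i : ℤ) + t := Int.toNat_of_nonneg h.1
    have hmg : m ∈ Finset.range g := Finset.mem_range.mpr (by omega)
    rw [Finset.sum_eq_single_of_mem m hmg]
    · rw [if_pos (by omega), zext, if_pos (by omega)]
      congr 1
      rw [← hmi]
      norm_cast
    · intro b _ hb
      rw [if_neg (by omega)]
  · rw [zext, if_neg h, mul_zero]
    apply Finset.sum_eq_zero
    intro i' hi'
    have := Finset.mem_range.mp hi'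
    rw [if_neg (by omega)]

lemma fiber_paf (d : ℕ) [NeZero d] (C : ZMod d → ℤ) (u : ZMod d) :
    ∑ p ∈ (Finset.range d ×ˢ Finset.range d).filter
        (fun p => (p.2 : ZMod d) - (p.1 : ZMod d) = u), C p.1 * C p.2 = paf d C u := by
  rw [Finset.sum_filter, Finset.sum_product, paf]
  refine Finset.sum_congr rfl fun j hj => ?_
  set m := ((j : ZMod d) + u).val with hm
  have hmd : m ∈ Finset.range d := Finset.mem_range.mpr (ZMod.val_lt _)
  have hmc : (m : ZMod d) = (j : ZMod d) + u := ZMod.natCast_rightInverse _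
  rw [Finset.sum_eq_single_of_mem m hmd]
  · rw [if_pos (by rw [hmc]; ring), hmc]
  · intro b hb hbm
    rw [if_neg]
    intro h
    apply hbm
    have h2 : (b : ZMod d) = (m : ZMod d) := by rw [hmc]; linear_combination h
    have h3 := congrArg ZMod.val h2
    rwa [ZMod.val_cast_of_lt (Finset.mem_range.mp hb),
      ZMod.val_cast_of_lt (Finset.mem_range.mp hmd)] at h3

lemma sum_range_zmod (n : ℕ) [NeZero n] (F : ZMod n → ℤ) :
    ∑ i ∈ Finset.range n, F i = ∑ k : ZMod n, F k := by
  refine Finset.sum_nbij' (fun i => (i : ZMod n)) (fun k => k.val) ?_ ?_ ?_ ?_ ?_ <;>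
    try intro a ha
  · exact Finset.mem_univ _
  · exact Finset.mem_range.mpr (ZMod.val_lt a)
  · exact ZMod.val_cast_of_lt (Finset.mem_range.mp ha)
  · exact ZMod.natCast_rightInverse a
  · rfl

lemma golay_elem (g d : ℕ) (hg : 0 < g) (hd : 0 < d) (A B : ZMod g → ℤ)
    (hA : ∀ i, A i = 1 ∨ A i = -1) (hB : ∀ i, B i = 1 ∨ B i = -1)
    (hGolay : ∀ s : ℤ, s ≠ 0 → naf g A s + naf g B s = 0) :
    els (g*d) g (fun i => (i:ℤ)) (fun i => A i) * els (g*d) g (fun i => -(i:ℤ)) (fun i => A i)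
      + els (g*d) g (fun i => (i:ℤ)) (fun i => B i) * els (g*d) g (fun i => -(i:ℤ)) (fun i => B i)
      = AddMonoidAlgebra.single 0 (2*(g:ℤ)) := by
  haveI : NeZero (g*d) := ⟨(Nat.mul_pos hg hd).ne'⟩
  ext k
  rw [AddMonoidAlgebra.coeff_add, Finsupp.add_apply, els_mul, els_mul, sum_single_apply, sum_single_apply,
    ← Finset.sum_add_distrib]
  simp only [← Finset.sum_add_distrib, ite_add_ite, add_zero]
  rw [← Finset.sum_product']
  have hmaps : ∀ p ∈ Finset.range g ×ˢ Finset.range g,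
      ((p.2 : ℤ) - (p.1 : ℤ)) ∈ Finset.Ioo (-(g:ℤ)) (g:ℤ) := by
    intro p hp
    rw [Finset.mem_product, Finset.mem_range, Finset.mem_range] at hp
    rw [Finset.mem_Ioo]
    omega
  rw [← Finset.sum_fiberwise_of_maps_to hmaps]
  have key : ∀ t ∈ Finset.Ioo (-(g:ℤ)) (g:ℤ),
      (∑ p ∈ (Finset.range g ×ˢ Finset.range g).filter
          (fun p => (p.2 : ℤ) - (p.1 : ℤ) = t),
        if (((p.1:ℤ) + -(p.2:ℤ) : ℤ) : ZMod (g*d)) = k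
          then A p.1 * A p.2 + B p.1 * B p.2 else 0)
      = if ((-t : ℤ) : ZMod (g*d)) = k then naf g A t + naf g B t else 0 := by
    intro t _
    have hcong : ∀ p ∈ (Finset.range g ×ˢ Finset.range g).filter
        (fun p => (p.2 : ℤ) - (p.1 : ℤ) = t),
        (if (((p.1:ℤ) + -(p.2:ℤ) : ℤ) : ZMod (g*d)) = k
          then A p.1 * A p.2 + B p.1 * B p.2 else 0)
        = if ((-t : ℤ) : ZMod (g*d)) = k then A p.1 * A p.2 + B p.1 * B p.2 else 0 := by
      intro p hp
      have h2 := (Finset.mem_filter.mp hp).2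
      rw [show ((p.1:ℤ) + -(p.2:ℤ)) = -t by linarith]
    rw [Finset.sum_congr rfl hcong]
    split
    · rw [← fiber_naf g A t, ← fiber_naf g B t, ← Finset.sum_add_distrib]
    · exact Finset.sum_const_zero
  rw [Finset.sum_congr rfl key, AddMonoidAlgebra.coeff_single, Finsupp.single_apply]
  by_cases hk : (0 : ZMod (g*d)) = k
  · rw [if_pos hk]
    have h0 : (0:ℤ) ∈ Finset.Ioo (-(g:ℤ)) (g:ℤ) := by
      rw [Finset.mem_Ioo]; constructor <;> [linarith [Int.natCast_pos.mpr hg]; exact_mod_cast hg]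
    rw [Finset.sum_eq_single_of_mem 0 h0]
    · rw [if_pos (by rw [neg_zero, Int.cast_zero]; exact hk), naf_zero g A hA, naf_zero g B hB]
      ring
    · intro t _ htne
      split
      · exact hGolay t htne
      · rfl
  · rw [if_neg hk]
    apply Finset.sum_eq_zero
    intro t _
    by_cases ht0 : t = 0
    · subst ht0
      rw [if_neg (by rwa [neg_zero, Int.cast_zero])]
    · split
      · exact hGolay t ht0
      · rfl

lemma paf_zero (d : ℕ) (C : ZMod d → ℤ) (hC : ∀ i, C i = 1 ∨ C i = -1) :
    paf d C 0 = d := by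
  rw [paf]
  have h1 : ∀ i ∈ Finset.range d, C i * C ((i : ZMod d) + 0) = 1 := by
    intro i hi
    rw [add_zero]
    rcases hC i with h | h <;> rw [h] <;> norm_num
  rw [Finset.sum_congr rfl h1]
  simp

lemma cast_g_mul (g d : ℕ) [NeZero d] (x : ℤ) :
    ((g * x : ℤ) : ZMod (g*d)) = ((g * ((x : ZMod d)).val : ℕ) : ZMod (g*d)) := by
  have h1 : ((x - ((x : ZMod d)).val : ℤ) : ZMod d) = 0 := by
    push_cast
    rw [ZMod.natCast_rightInverse (x : ZMod d), sub_self]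
  rw [ZMod.intCast_zmod_eq_zero_iff_dvd] at h1
  have h2 : ((g*d : ℕ) : ℤ) ∣ (g * x - (g * ((x : ZMod d)).val : ℕ) : ℤ) := by
    obtain ⟨c, hc⟩ := h1
    exact ⟨c, by push_cast; linear_combination (g:ℤ) * hc⟩
  have h3 := (ZMod.intCast_zmod_eq_zero_iff_dvd _ (g*d)).mpr h2
  push_cast at h3 ⊢
  linear_combination h3

lemma periodic_elem (g d : ℕ) (hg : 0 < g) (hd : 0 < d) (C D : ZMod d → ℤ)
    (hC : ∀ i, C i = 1 ∨ C i = -1) (hD : ∀ i, D i = 1 ∨ D i = -1)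
    (hPeriodic : ∀ s : ZMod d, s ≠ 0 → paf d C s + paf d D s = 0) :
    els (g*d) d (fun j => g*(j:ℤ)) (fun j => C j + D j)
        * els (g*d) d (fun j => -(g*(j:ℤ))) (fun j => C j + D j)
      + els (g*d) d (fun j => g*(j:ℤ)) (fun j => C j - D j)
        * els (g*d) d (fun j => -(g*(j:ℤ))) (fun j => C j - D j)
      = AddMonoidAlgebra.single 0 (4*(d:ℤ)) := by
  haveI : NeZero d := ⟨hd.ne'⟩
  haveI : NeZero (g*d) := ⟨(Nat.mul_pos hg hd).ne'⟩
  ext k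
  rw [AddMonoidAlgebra.coeff_add, Finsupp.add_apply, els_mul, els_mul, sum_single_apply, sum_single_apply]
  simp only [← Finset.sum_add_distrib, ite_add_ite, add_zero]
  rw [← Finset.sum_product']
  have hmaps : ∀ p ∈ Finset.range d ×ˢ Finset.range d,
      ((p.2 : ZMod d) - (p.1 : ZMod d)) ∈ (Finset.univ : Finset (ZMod d)) :=
    fun p _ => Finset.mem_univ _
  rw [← Finset.sum_fiberwise_of_maps_to hmaps]
  have key : ∀ u ∈ (Finset.univ : Finset (ZMod d)),
      (∑ p ∈ (Finset.range d ×ˢ Finset.range d).filter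
          (fun p => (p.2 : ZMod d) - (p.1 : ZMod d) = u),
        if ((g*(p.1:ℤ) + -(g*(p.2:ℤ)) : ℤ) : ZMod (g*d)) = k
          then (C p.1 + D p.1) * (C p.2 + D p.2) + (C p.1 - D p.1) * (C p.2 - D p.2) else 0)
      = if ((g * ((-u).val) : ℕ) : ZMod (g*d)) = k then 2*(paf d C u + paf d D u) else 0 := by
    intro u _
    have hcong : ∀ p ∈ (Finset.range d ×ˢ Finset.range d).filter
        (fun p => (p.2 : ZMod d) - (p.1 : ZMod d) = u),
        (if ((g*(p.1:ℤ) + -(g*(p.2:ℤ)) : ℤ) : ZMod (g*d)) = k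
          then (C p.1 + D p.1) * (C p.2 + D p.2) + (C p.1 - D p.1) * (C p.2 - D p.2) else 0)
        = if ((g * ((-u).val) : ℕ) : ZMod (g*d)) = k
            then 2*(C p.1 * C p.2) + 2*(D p.1 * D p.2) else 0 := by
      intro p hp
      have h2 := (Finset.mem_filter.mp hp).2
      have hexp : ((g*(p.1:ℤ) + -(g*(p.2:ℤ)) : ℤ) : ZMod (g*d))
          = ((g * ((-u).val) : ℕ) : ZMod (g*d)) := by
        rw [show (g*(p.1:ℤ) + -(g*(p.2:ℤ))) = g * ((p.1:ℤ) - (p.2:ℤ)) by ring,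
          cast_g_mul g d]
        congr 2
        rw [← h2]
        push_cast
        ring
      rw [hexp]
      split
      · ring
      · rfl
    rw [Finset.sum_congr rfl hcong]
    split
    · rw [Finset.sum_add_distrib, ← Finset.mul_sum, ← Finset.mul_sum,
        fiber_paf d C u, fiber_paf d D u]
      ring
    · exact Finset.sum_const_zero
  rw [Finset.sum_congr rfl key, AddMonoidAlgebra.coeff_single, Finsupp.single_apply]
  have hψ0 : ∀ w : ZMod d, ((g * w.val : ℕ) : ZMod (g*d)) = 0 → w = 0 := by
    intro w hw
    rw [ZMod.natCast_eq_zero_iff] at hw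
    have hlt : g * w.val < g * d := by
      exact mul_lt_mul_of_pos_left (ZMod.val_lt w) hg
    rcases Nat.eq_zero_or_pos (g * w.val) with h0 | hpos
    · have : w.val = 0 := by
        rcases Nat.mul_eq_zero.mp h0 with h | h
        · omega
        · exact h
      exact (ZMod.val_eq_zero w).mp this
    · exact absurd (Nat.le_of_dvd hpos hw) (by omega)
  by_cases hk : (0 : ZMod (g*d)) = k
  · rw [if_pos hk]
    rw [Finset.sum_eq_single_of_mem 0 (Finset.mem_univ 0)]
    · rw [if_pos (by rw [neg_zero, ZMod.val_zero, Nat.mul_zero, Nat.cast_zero]; exact hk),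
        paf_zero d C hC, paf_zero d D hD]
      ring
    · intro u _ hune
      split
      · rw [hPeriodic u hune]; ring
      · rfl
  · rw [if_neg hk]
    apply Finset.sum_eq_zero
    intro u _
    by_cases hu : u = 0
    · subst hu
      rw [if_neg (by rw [neg_zero, ZMod.val_zero, Nat.mul_zero, Nat.cast_zero]; exact fun h => hk h)]
    · split
      · rw [hPeriodic u hu]; ring
      · rfl


lemma els_mul_swap (n m : ℕ) (φ ψ φ' ψ' : ℕ → ℤ) (h : ∀ x y : ℕ, φ x + ψ y = φ' y + ψ' x)
    (P Q : ℕ → ℤ) :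
    els n m φ P * els n m ψ Q = els n m φ' Q * els n m ψ' P := by
  rw [els_mul, els_mul, Finset.sum_comm]
  refine Finset.sum_congr rfl fun x _ => Finset.sum_congr rfl fun y _ => ?_
  rw [← h y x, mul_comm]

lemma els_mul_negneg (n m m' : ℕ) (φ ψ : ℕ → ℤ) (P Q : ℕ → ℤ) :
    els n m φ (fun i => -(P i)) * els n m' ψ (fun i => -(Q i)) = els n m φ P * els n m' ψ Q := by
  rw [els_mul, els_mul]
  refine Finset.sum_congr rfl fun x _ => Finset.sum_congr rfl fun y _ => ?_
  rw [neg_mul_neg]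

lemma els_mul_negswap (n m : ℕ) (φ ψ : ℕ → ℤ) (h : ∀ x y : ℕ, φ x + ψ y = φ y + ψ x)
    (P Q : ℕ → ℤ) :
    els n m φ Q * els n m ψ (fun i => -(P i)) = -(els n m φ P * els n m ψ Q) := by
  rw [els_mul, els_mul, Finset.sum_comm, ← Finset.sum_neg_distrib]
  refine Finset.sum_congr rfl fun x _ => ?_
  rw [← Finset.sum_neg_distrib]
  refine Finset.sum_congr rfl fun y _ => ?_
  rw [← AddMonoidAlgebra.single_neg, ← h y x]
  congr 1
  ring


lemma comb_apply (g d : ℕ) (hg : 0 < g) (hd : 0 < d) (P Q : ZMod g → ℤ) (R S : ℕ → ℤ)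
    (k : ZMod (g*d)) :
    (els (g*d) g (fun i => (i:ℤ)) (fun i => P i) * els (g*d) d (fun j => (g:ℤ)*(j:ℤ)) R
      + els (g*d) g (fun i => (g:ℤ)-1-(i:ℤ)) (fun i => Q i)
        * els (g*d) d (fun j => (g:ℤ)*(j:ℤ)) S).coeff k
    = P (k.val % g) * R (k.val / g) + Q ((g - 1 - k.val % g : ℕ)) * S (k.val / g) := by
  haveI : NeZero (g*d) := ⟨(Nat.mul_pos hg hd).ne'⟩
  rw [AddMonoidAlgebra.coeff_add, Finsupp.add_apply, els_mul, els_mul, sum_single_apply, sum_single_apply]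
  have hswap : (∑ i ∈ Finset.range g, ∑ j ∈ Finset.range d,
        if (((g:ℤ)-1-(i:ℤ) + (g:ℤ)*(j:ℤ) : ℤ) : ZMod (g*d)) = k then Q i * S j else 0)
      = ∑ i ∈ Finset.range g, ∑ j ∈ Finset.range d,
        if (((i:ℤ) + (g:ℤ)*(j:ℤ) : ℤ) : ZMod (g*d)) = k then Q ((g - 1 - i : ℕ)) * S j else 0 := by
    rw [← Finset.sum_range_reflect]
    refine Finset.sum_congr rfl fun i hi => Finset.sum_congr rfl fun j _ => ?_
    have hi' := Finset.mem_range.mp hi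
    have hcast : ((g:ℤ)-1-((g-1-i : ℕ):ℤ) + (g:ℤ)*(j:ℤ)) = ((i:ℤ) + (g:ℤ)*(j:ℤ)) := by
      have : ((g-1-i : ℕ):ℤ) = (g:ℤ)-1-(i:ℤ) := by omega
      rw [this]; ring
    rw [hcast]
  rw [hswap, ← Finset.sum_add_distrib]
  simp only [← Finset.sum_add_distrib, ite_add_ite, add_zero]
  rw [← Finset.sum_product']
  have hval := ZMod.val_lt k
  have hmem : (k.val % g, k.val / g) ∈ Finset.range g ×ˢ Finset.range d := by
    rw [Finset.mem_product, Finset.mem_range, Finset.mem_range]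
    exact ⟨Nat.mod_lt _ hg, (Nat.div_lt_iff_lt_mul hg).mpr (by rw [Nat.mul_comm d g]; exact hval)⟩
  rw [Finset.sum_eq_single_of_mem (k.val % g, k.val / g) hmem]
  · rw [if_pos]
    have h1 : ((k.val % g : ℕ):ℤ) + (g:ℤ)*((k.val / g : ℕ):ℤ) = ((k.val : ℕ) : ℤ) := by
      push_cast
      exact_mod_cast congrArg (Nat.cast : ℕ → ℤ) (Nat.mod_add_div k.val g)
    rw [h1]
    rw [show (((k.val : ℕ):ℤ) : ZMod (g*d)) = ((k.val : ℕ) : ZMod (g*d)) from Int.cast_natCast _]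
    exact ZMod.natCast_rightInverse k
  · intro p hp hne
    rw [Finset.mem_product, Finset.mem_range, Finset.mem_range] at hp
    rw [if_neg]
    intro hcond
    apply hne
    have hlt : p.1 + g * p.2 < g * d := by
      have h1 := hp.1
      have h2 := hp.2
      nlinarith
    have hcast : (((p.1:ℤ) + (g:ℤ)*(p.2:ℤ) : ℤ) : ZMod (g*d)) = ((p.1 + g*p.2 : ℕ) : ZMod (g*d)) := by
      push_cast; ring
    rw [hcast] at hcond
    have hvv : (p.1 + g*p.2) = k.val := by
      have := congrArg ZMod.val hcond
      rwa [ZMod.val_cast_of_lt hlt] at this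
    have hp1 : p.1 = k.val % g := by
      rw [← hvv, Nat.add_mul_mod_self_left, Nat.mod_eq_of_lt hp.1]
    have hp2 : p.2 = k.val / g := by
      rw [← hvv, Nat.add_mul_div_left _ _ hg, Nat.div_eq_of_lt hp.1, Nat.zero_add]
    exact Prod.ext hp1 hp2

lemma comb_apply_neg (g d : ℕ) (hg : 0 < g) (hd : 0 < d) (P Q : ZMod g → ℤ) (R S : ℕ → ℤ)
    (k : ZMod (g*d)) :
    (els (g*d) g (fun i => -(i:ℤ)) (fun i => P i) * els (g*d) d (fun j => -((g:ℤ)*(j:ℤ))) R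
      + els (g*d) g (fun i => -((g:ℤ)-1-(i:ℤ))) (fun i => Q i)
        * els (g*d) d (fun j => -((g:ℤ)*(j:ℤ))) S).coeff k
    = (els (g*d) g (fun i => (i:ℤ)) (fun i => P i) * els (g*d) d (fun j => (g:ℤ)*(j:ℤ)) R
      + els (g*d) g (fun i => (g:ℤ)-1-(i:ℤ)) (fun i => Q i)
        * els (g*d) d (fun j => (g:ℤ)*(j:ℤ)) S).coeff (-k) := by
  haveI : NeZero (g*d) := ⟨(Nat.mul_pos hg hd).ne'⟩
  rw [AddMonoidAlgebra.coeff_add, AddMonoidAlgebra.coeff_add, Finsupp.add_apply, Finsupp.add_apply, els_mul, els_mul, els_mul, els_mul,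
    sum_single_apply, sum_single_apply, sum_single_apply, sum_single_apply]
  congr 1 <;>
    refine Finset.sum_congr rfl fun i _ => Finset.sum_congr rfl fun j _ => ?_
  · have hx : ((-(i:ℤ) + -((g:ℤ)*(j:ℤ)) : ℤ) : ZMod (g*d))
        = -((((i:ℤ) + (g:ℤ)*(j:ℤ) : ℤ)) : ZMod (g*d)) := by push_cast; ring
    simp only [hx, neg_eq_iff_eq_neg]
  · have hx : ((-((g:ℤ)-1-(i:ℤ)) + -((g:ℤ)*(j:ℤ)) : ℤ) : ZMod (g*d))
        = -(((((g:ℤ)-1-(i:ℤ)) + (g:ℤ)*(j:ℤ) : ℤ)) : ZMod (g*d)) := by push_cast; ring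
    simp only [hx, neg_eq_iff_eq_neg]


theorem golay_mul_periodic_golay (g d : ℕ) (hg : 0 < g) (hd : 0 < d)
    (A B : ZMod g → ℤ) (C D : ZMod d → ℤ)
    (hA : ∀ i, A i = 1 ∨ A i = -1) (hB : ∀ i, B i = 1 ∨ B i = -1)
    (hC : ∀ i, C i = 1 ∨ C i = -1) (hD : ∀ i, D i = 1 ∨ D i = -1)
    (hGolay : ∀ s : ℤ, s ≠ 0 → naf g A s + naf g B s = 0)
    (hPeriodic : ∀ s : ZMod d, s ≠ 0 → paf d C s + paf d D s = 0) :
    ∃ E F : ZMod (g * d) → ℤ,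
      (∀ i, E i = 1 ∨ E i = -1) ∧ (∀ i, F i = 1 ∨ F i = -1) ∧
      ∀ s : ZMod (g * d), s ≠ 0 → paf (g * d) E s + paf (g * d) F s = 0 := by
  haveI : NeZero (g*d) := ⟨(Nat.mul_pos hg hd).ne'⟩
  haveI : NeZero d := ⟨hd.ne'⟩
  set Eseq : ZMod (g*d) → ℤ := fun k =>
    if C ((k.val / g : ℕ)) = D ((k.val / g : ℕ)) then A ((k.val % g : ℕ)) * C ((k.val / g : ℕ))
    else B ((g - 1 - k.val % g : ℕ)) * C ((k.val / g : ℕ)) with hEdef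
  set Fseq : ZMod (g*d) → ℤ := fun k =>
    if C ((k.val / g : ℕ)) = D ((k.val / g : ℕ)) then B ((k.val % g : ℕ)) * C ((k.val / g : ℕ))
    else -(A ((g - 1 - k.val % g : ℕ)) * C ((k.val / g : ℕ))) with hFdef
  have pm : ∀ x y : ℤ, (x = 1 ∨ x = -1) → (y = 1 ∨ y = -1) → (x*y = 1 ∨ x*y = -1) := by
    rintro x y (rfl|rfl) (rfl|rfl) <;> norm_num
  have hEpm : ∀ i, Eseq i = 1 ∨ Eseq i = -1 := by
    intro k
    rw [hEdef]
    dsimp only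
    split
    · exact pm _ _ (hA _) (hC _)
    · exact pm _ _ (hB _) (hC _)
  have hFpm : ∀ i, Fseq i = 1 ∨ Fseq i = -1 := by
    intro k
    rw [hFdef]
    dsimp only
    split
    · exact pm _ _ (hB _) (hC _)
    · rcases pm _ _ (hA _) (hC _) with h | h <;> rw [h] <;> norm_num
  -- coefficient identities
  have hE : ∀ k : ZMod (g*d), (els (g*d) g (fun i => (i:ℤ)) (fun i => A i) * els (g*d) d (fun j => (g:ℤ)*(j:ℤ)) (fun j => C j + D j) + els (g*d) g (fun i => (g:ℤ)-1-(i:ℤ)) (fun i => B i) * els (g*d) d (fun j => (g:ℤ)*(j:ℤ)) (fun j => C j - D j)).coeff k = 2 * Eseq k := by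
    intro k
    rw [comb_apply g d hg hd A B (fun x => C x + D x) (fun x => C x - D x) k, hEdef]
    dsimp only
    by_cases hcd : C ((k.val / g : ℕ)) = D ((k.val / g : ℕ))
    · rw [if_pos hcd, ← hcd]; ring
    · rw [if_neg hcd]
      have hcd' : D ((k.val / g : ℕ)) = -C ((k.val / g : ℕ)) := by
        rcases hC ((k.val / g : ℕ)) with h1|h1 <;> rcases hD ((k.val / g : ℕ)) with h2|h2
        · exact absurd (h1.trans h2.symm) hcd
        · rw [h1, h2]; try norm_num
        · rw [h1, h2]; try norm_num
        · exact absurd (h1.trans h2.symm) hcd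
      rw [hcd']; ring
  have hF : ∀ k : ZMod (g*d), (els (g*d) g (fun i => (i:ℤ)) (fun i => B i) * els (g*d) d (fun j => (g:ℤ)*(j:ℤ)) (fun j => C j + D j) + els (g*d) g (fun i => (g:ℤ)-1-(i:ℤ)) (fun i => -(A i)) * els (g*d) d (fun j => (g:ℤ)*(j:ℤ)) (fun j => C j - D j)).coeff k = 2 * Fseq k := by
    intro k
    rw [comb_apply g d hg hd B (fun x => -(A x)) (fun x => C x + D x) (fun x => C x - D x) k, hFdef]
    dsimp only
    by_cases hcd : C ((k.val / g : ℕ)) = D ((k.val / g : ℕ))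
    · rw [if_pos hcd, ← hcd]; ring
    · rw [if_neg hcd]
      have hcd' : D ((k.val / g : ℕ)) = -C ((k.val / g : ℕ)) := by
        rcases hC ((k.val / g : ℕ)) with h1|h1 <;> rcases hD ((k.val / g : ℕ)) with h2|h2
        · exact absurd (h1.trans h2.symm) hcd
        · rw [h1, h2]; try norm_num
        · rw [h1, h2]; try norm_num
        · exact absurd (h1.trans h2.symm) hcd
      rw [hcd']; ring
  have hE' : ∀ k : ZMod (g*d), (els (g*d) g (fun i => -(i:ℤ)) (fun i => A i) * els (g*d) d (fun j => -((g:ℤ)*(j:ℤ))) (fun j => C j + D j) + els (g*d) g (fun i => -((g:ℤ)-1-(i:ℤ))) (fun i => B i) * els (g*d) d (fun j => -((g:ℤ)*(j:ℤ))) (fun j => C j - D j)).coeff k = (els (g*d) g (fun i => (i:ℤ)) (fun i => A i) * els (g*d) d (fun j => (g:ℤ)*(j:ℤ)) (fun j => C j + D j) + els (g*d) g (fun i => (g:ℤ)-1-(i:ℤ)) (fun i => B i) * els (g*d) d (fun j => (g:ℤ)*(j:ℤ)) (fun j => C j - D j)).coeff (-k) :=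
    fun k => comb_apply_neg g d hg hd A B (fun x => C x + D x) (fun x => C x - D x) k
  have hF' : ∀ k : ZMod (g*d), (els (g*d) g (fun i => -(i:ℤ)) (fun i => B i) * els (g*d) d (fun j => -((g:ℤ)*(j:ℤ))) (fun j => C j + D j) + els (g*d) g (fun i => -((g:ℤ)-1-(i:ℤ))) (fun i => -(A i)) * els (g*d) d (fun j => -((g:ℤ)*(j:ℤ))) (fun j => C j - D j)).coeff k = (els (g*d) g (fun i => (i:ℤ)) (fun i => B i) * els (g*d) d (fun j => (g:ℤ)*(j:ℤ)) (fun j => C j + D j) + els (g*d) g (fun i => (g:ℤ)-1-(i:ℤ)) (fun i => -(A i)) * els (g*d) d (fun j => (g:ℤ)*(j:ℤ)) (fun j => C j - D j)).coeff (-k) :=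
    fun k => comb_apply_neg g d hg hd B (fun x => -(A x)) (fun x => C x + D x) (fun x => C x - D x) k
  -- the main algebraic identity
  have h1 : els (g*d) g (fun i => (g:ℤ)-1-(i:ℤ)) (fun i => B i) * els (g*d) g (fun i => -((g:ℤ)-1-(i:ℤ))) (fun i => B i) = els (g*d) g (fun i => (i:ℤ)) (fun i => B i) * els (g*d) g (fun i => -(i:ℤ)) (fun i => B i) :=
    els_mul_swap (g*d) g _ _ _ _ (by intro x y; ring) (fun i => B i) (fun i => B i)
  have h2 : els (g*d) g (fun i => (g:ℤ)-1-(i:ℤ)) (fun i => -(A i)) * els (g*d) g (fun i => -((g:ℤ)-1-(i:ℤ))) (fun i => -(A i)) = els (g*d) g (fun i => (i:ℤ)) (fun i => A i) * els (g*d) g (fun i => -(i:ℤ)) (fun i => A i) :=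
    (els_mul_negneg (g*d) g g _ _ (fun i => A i) (fun i => A i)).trans
      (els_mul_swap (g*d) g _ _ _ _ (by intro x y; ring) (fun i => A i) (fun i => A i))
  have h3 : els (g*d) g (fun i => (i:ℤ)) (fun i => B i) * els (g*d) g (fun i => -((g:ℤ)-1-(i:ℤ))) (fun i => -(A i)) = -(els (g*d) g (fun i => (i:ℤ)) (fun i => A i) * els (g*d) g (fun i => -((g:ℤ)-1-(i:ℤ))) (fun i => B i)) :=
    els_mul_negswap (g*d) g _ _ (by intro x y; ring) (fun i => A i) (fun i => B i)
  have h4 : els (g*d) g (fun i => -(i:ℤ)) (fun i => B i) * els (g*d) g (fun i => (g:ℤ)-1-(i:ℤ)) (fun i => -(A i)) = -(els (g*d) g (fun i => -(i:ℤ)) (fun i => A i) * els (g*d) g (fun i => (g:ℤ)-1-(i:ℤ)) (fun i => B i)) :=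
    els_mul_negswap (g*d) g _ _ (by intro x y; ring) (fun i => A i) (fun i => B i)
  have hGe := golay_elem g d hg hd A B hA hB hGolay
  have hPe := periodic_elem g d hg hd C D hC hD hPeriodic
  have hss : AddMonoidAlgebra.single (0 : ZMod (g*d)) (2*(g:ℤ))
      * AddMonoidAlgebra.single (0 : ZMod (g*d)) (4*(d:ℤ))
      = AddMonoidAlgebra.single (0 : ZMod (g*d)) (8*((g:ℤ)*(d:ℤ))) := by
    rw [AddMonoidAlgebra.single_mul_single, add_zero]
    congr 1
    ring
  have Hmain : (els (g*d) g (fun i => (i:ℤ)) (fun i => A i) * els (g*d) d (fun j => (g:ℤ)*(j:ℤ)) (fun j => C j + D j) + els (g*d) g (fun i => (g:ℤ)-1-(i:ℤ)) (fun i => B i) * els (g*d) d (fun j => (g:ℤ)*(j:ℤ)) (fun j => C j - D j)) * (els (g*d) g (fun i => -(i:ℤ)) (fun i => A i) * els (g*d) d (fun j => -((g:ℤ)*(j:ℤ))) (fun j => C j + D j) + els (g*d) g (fun i => -((g:ℤ)-1-(i:ℤ))) (fun i => B i) * els (g*d) d (fun j => -((g:ℤ)*(j:ℤ))) (fun j =>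 C j - D j)) + (els (g*d) g (fun i => (i:ℤ)) (fun i => B i) * els (g*d) d (fun j => (g:ℤ)*(j:ℤ)) (fun j => C j + D j) + els (g*d) g (fun i => (g:ℤ)-1-(i:ℤ)) (fun i => -(A i)) * els (g*d) d (fun j => (g:ℤ)*(j:ℤ)) (fun j => C j - D j)) * (els (g*d) g (fun i => -(i:ℤ)) (fun i => B i) * els (g*d) d (fun j => -((g:ℤ)*(j:ℤ))) (fun j => C j + D j) + els (g*d) g (fun i => -((g:ℤ)-1-(i:ℤ))) (fun i => -(A i)) * els (g*d) d (fun j => -((g:ℤ)*(j:ℤ))) (fun j => C j - D j))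
      = AddMonoidAlgebra.single (0 : ZMod (g*d)) (8*((g:ℤ)*(d:ℤ))) := by
    linear_combination (els (g*d) d (fun j => (g:ℤ)*(j:ℤ)) (fun j => C j - D j) * els (g*d) d (fun j => -((g:ℤ)*(j:ℤ))) (fun j => C j - D j)) * h1 + (els (g*d) d (fun j => (g:ℤ)*(j:ℤ)) (fun j => C j - D j) * els (g*d) d (fun j => -((g:ℤ)*(j:ℤ))) (fun j => C j - D j)) * h2 + (els (g*d) d (fun j => (g:ℤ)*(j:ℤ)) (fun j => C j + D j) * els (g*d) d (fun j => -((g:ℤ)*(j:ℤ))) (fun j => C j - D j)) * h3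
      + (els (g*d) d (fun j => (g:ℤ)*(j:ℤ)) (fun j => C j - D j) * els (g*d) d (fun j => -((g:ℤ)*(j:ℤ))) (fun j => C j + D j)) * h4 + (els (g*d) d (fun j => (g:ℤ)*(j:ℤ)) (fun j => C j + D j) * els (g*d) d (fun j => -((g:ℤ)*(j:ℤ))) (fun j => C j + D j) + els (g*d) d (fun j => (g:ℤ)*(j:ℤ)) (fun j => C j - D j) * els (g*d) d (fun j => -((g:ℤ)*(j:ℤ))) (fun j => C j - D j)) * hGe
      + (AddMonoidAlgebra.single (0 : ZMod (g*d)) (2*(g:ℤ))) * hPe + hss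
  refine ⟨Eseq, Fseq, hEpm, hFpm, ?_⟩
  intro s hs
  have hEv : ((els (g*d) g (fun i => (i:ℤ)) (fun i => A i) * els (g*d) d (fun j => (g:ℤ)*(j:ℤ)) (fun j => C j + D j) + els (g*d) g (fun i => (g:ℤ)-1-(i:ℤ)) (fun i => B i) * els (g*d) d (fun j => (g:ℤ)*(j:ℤ)) (fun j => C j - D j)) * (els (g*d) g (fun i => -(i:ℤ)) (fun i => A i) * els (g*d) d (fun j => -((g:ℤ)*(j:ℤ))) (fun j => C j + D j) + els (g*d) g (fun i => -((g:ℤ)-1-(i:ℤ))) (fun i => B i) * els (g*d) d (fun j => -((g:ℤ)*(j:ℤ))) (fun j => C j - D j))).coeff (-s) = 4 * paf (g*d) Eseq s := by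
    rw [mul_apply_eq, paf, sum_range_zmod (g*d) (fun k => Eseq k * Eseq (k + s)), Finset.mul_sum]
    refine Finset.sum_congr rfl fun k _ => ?_
    rw [hE' (-s - k), show -(-s - k) = k + s by ring, hE k, hE (k + s)]
    ring
  have hFv : ((els (g*d) g (fun i => (i:ℤ)) (fun i => B i) * els (g*d) d (fun j => (g:ℤ)*(j:ℤ)) (fun j => C j + D j) + els (g*d) g (fun i => (g:ℤ)-1-(i:ℤ)) (fun i => -(A i)) * els (g*d) d (fun j => (g:ℤ)*(j:ℤ)) (fun j => C j - D j)) * (els (g*d) g (fun i => -(i:ℤ)) (fun i => B i) * els (g*d) d (fun j => -((g:ℤ)*(j:ℤ))) (fun j => C j + D j) + els (g*d) g (fun i => -((g:ℤ)-1-(i:ℤ))) (fun i => -(A i)) * els (g*d) d (fun j => -((g:ℤ)*(j:ℤ))) (fun j => C j - D j))).coeff (-s) = 4 * paf (g*d) Fseq s := by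
    rw [mul_apply_eq, paf, sum_range_zmod (g*d) (fun k => Fseq k * Fseq (k + s)), Finset.mul_sum]
    refine Finset.sum_congr rfl fun k _ => ?_
    rw [hF' (-s - k), show -(-s - k) = k + s by ring, hF k, hF (k + s)]
    ring
  have h0 : ((els (g*d) g (fun i => (i:ℤ)) (fun i => A i) * els (g*d) d (fun j => (g:ℤ)*(j:ℤ)) (fun j => C j + D j) + els (g*d) g (fun i => (g:ℤ)-1-(i:ℤ)) (fun i => B i) * els (g*d) d (fun j => (g:ℤ)*(j:ℤ)) (fun j => C j - D j)) * (els (g*d) g (fun i => -(i:ℤ)) (fun i => A i) * els (g*d) d (fun j => -((g:ℤ)*(j:ℤ))) (fun j => C j + D j) + els (g*d) g (fun i => -((g:ℤ)-1-(i:ℤ))) (fun i => B i) * els (g*d) d (fun j => -((g:ℤ)*(j:ℤ))) (fun j => C j - D j)) + (els (g*d) g (fun i => (i:ℤ)) (fun i => B i) * els (g*d) d (fun j => (g:ℤ)*(j:ℤ)) (fun j => C j + D j) + els (g*d) g (fun i => (g:ℤ)-1-(i:ℤ)) (fun i => -(A i)) * els (g*d) d (fun j => (g:ℤ)*(j:ℤ))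 (fun j => C j - D j)) * (els (g*d) g (fun i => -(i:ℤ)) (fun i => B i) * els (g*d) d (fun j => -((g:ℤ)*(j:ℤ))) (fun j => C j + D j) + els (g*d) g (fun i => -((g:ℤ)-1-(i:ℤ))) (fun i => -(A i)) * els (g*d) d (fun j => -((g:ℤ)*(j:ℤ))) (fun j => C j - D j))).coeff ((-s : ZMod (g*d))) = 0 := by
    rw [Hmain, AddMonoidAlgebra.coeff_single, Finsupp.single_apply, if_neg]
    intro h
    exact hs (neg_eq_zero.mp h.symm)
  rw [AddMonoidAlgebra.coeff_add, Finsupp.add_apply, hEv, hFv] at h0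
  linarith
end
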